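/- arXiv:2506.15137 — 4 statements merged into one kernel-verified Lean document; each statement's English description precedes it below -/
import Mathlib

section
/- Let G be a finite digraph regular of in-degree h, let k ≥ 0, and set the threshold t = h − k. Then G synchronizes from an initial active set S if and only if the complement V(G) \ S contains no nonempty subset K such that every vertex x ∈ K has at least k + 1 in-neighbors inside K. -/
open Finset

-- One step of the activation process: a vertex becomes active
-- if at least `t` of its in-neighbors are active.
open Classical in
noncomputable def actStep {V : Type*} [Fintype V] (E : V → V → Prop) (t : ℕ)
    (S : Finset V) : Finset V :=
  S ∪ Finset.univ.filter (fun v => t ≤ (S.filter (fun u => E u v)).card)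

/-- `activeSets E t S i` is the set of active vertices after `i` steps. -/
noncomputable def activeSets {V : Type*} [Fintype V] (E : V → V → Prop) (t : ℕ)
    (S : Finset V) (i : ℕ) : Finset V :=
  (actStep E t)^[i] S

-- The least number of steps needed to activate all vertices (`⊤` if never).
open Classical in
noncomputable def syncTime {V : Type*} [Fintype V] (E : V → V → Prop) (t : ℕ)
    (S : Finset V) : ℕ∞ :=
  if h : ∃ i, activeSets E t S i = Finset.univ then (Nat.find h : ℕ∞) else ⊤

/-- The higher diameter `d_{st}`: the max of `syncTime` over all `s`-subsets. -/
noncomputable def higherDiam {V : Type*} [Fintype V] (E : V → V → Prop) (t s : ℕ) : ℕ∞ :=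
  ⨆ S : {S : Finset V // S.card = s}, syncTime E t S.1

/-- There is a directed cycle of length `m` in the digraph `E`, all of whose
vertices lie in `T`. -/
def cycleIn {V : Type*} (E : V → V → Prop) (T : Set V) (m : ℕ) : Prop :=
  0 < m ∧ ∃ c : ZMod m → V, Function.Injective c ∧ (∀ i, c i ∈ T) ∧
    ∀ i, E (c i) (c (i + 1))

/-- There is a directed cycle of length `m` in the digraph `E`. -/
def hasCycle {V : Type*} (E : V → V → Prop) (m : ℕ) : Prop :=
  0 < m ∧ ∃ c : ZMod m → V, Function.Injective c ∧ ∀ i, E (c i) (c (i + 1))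

-- /-- For a digraph regular of in-degree `h`, threshold `t = h - k`: `G` synchronizes
-- from `S` iff `V \\ S` contains no nonempty subset `K` in which every vertex has at
-- least `k + 1` in-neighbors inside `K`. -/

lemma subset_actStep {V : Type*} [Fintype V] (E : V → V → Prop) (t : ℕ) (S : Finset V) :
    S ⊆ actStep E t S := by
  classical
  unfold actStep
  exact Finset.subset_union_left

lemma subset_activeSets {V : Type*} [Fintype V] (E : V → V → Prop) (t : ℕ) (S : Finset V)
    (i : ℕ) : S ⊆ activeSets E t S i := by
  induction i with
  | zero => simp [activeSets]
  | succ n ih =>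
      have : activeSets E t S (n + 1) = actStep E t (activeSets E t S n) := by
        simp [activeSets, Function.iterate_succ_apply']
      rw [this]
      exact ih.trans (subset_actStep E t _)

lemma activeSets_succ {V : Type*} [Fintype V] (E : V → V → Prop) (t : ℕ) (S : Finset V)
    (i : ℕ) : activeSets E t S (i + 1) = actStep E t (activeSets E t S i) := by
  simp [activeSets, Function.iterate_succ_apply']

open Classical in
theorem stmt_4 {V : Type*} [Fintype V] (E : V → V → Prop) (h k : ℕ) (hk : k ≤ h)
    (hreg : ∀ v : V, (Finset.univ.filter (fun u => E u v)).card = h) (S : Finset V) :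
    (∃ i, activeSets E (h - k) S i = Finset.univ) ↔
    ¬ ∃ K : Finset V, K.Nonempty ∧ K ⊆ Finset.univ \ S ∧
      ∀ x ∈ K, k + 1 ≤ (K.filter (fun u => E u x)).card := by
  classical
  constructor
  · rintro ⟨i, hi⟩ ⟨K, hKne, hKS, hKdeg⟩
    -- K stays inactive forever
    have key : ∀ j, Disjoint (activeSets E (h - k) S j) K := by
      intro j
      induction j with
      | zero =>
          simp only [activeSets, Function.iterate_zero, id]
          rw [Finset.disjoint_left]
          intro a haS haK
          have := hKS haK
          simp at this
          exact this haS
      | succ n ih =>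
          rw [activeSets_succ, Finset.disjoint_left]
          intro v hv hvK
          have hsub : (activeSets E (h - k) S n).filter (fun u => E u v) ⊆
              (Finset.univ.filter (fun u => E u v)) \ (K.filter (fun u => E u v)) := by
            intro x hx
            simp only [Finset.mem_filter, Finset.mem_sdiff, Finset.mem_univ, true_and] at hx ⊢
            exact ⟨hx.2, fun hxK => (Finset.disjoint_left.mp ih hx.1) hxK.1⟩
          have hKsub : K.filter (fun u => E u v) ⊆ Finset.univ.filter (fun u => E u v) := by
            intro x hx
            simp only [Finset.mem_filter] at hx ⊢
            exact ⟨Finset.mem_univ x, hx.2⟩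
          have hcard : ((activeSets E (h - k) S n).filter (fun u => E u v)).card ≤
              h - (K.filter (fun u => E u v)).card := by
            calc _ ≤ ((Finset.univ.filter (fun u => E u v)) \
                      (K.filter (fun u => E u v))).card := Finset.card_le_card hsub
              _ = h - (K.filter (fun u => E u v)).card := by
                  rw [Finset.card_sdiff_of_subset hKsub, hreg v]
          have hdeg := hKdeg v hvK
          have hle : (K.filter (fun u => E u v)).card ≤ h := by
            calc _ ≤ (Finset.univ.filter (fun u => E u v)).card := Finset.card_le_card hKsub
              _ = h := hreg v
          unfold actStep at hv
          simp only [Finset.mem_union, Finset.mem_filter, Finset.mem_univ, true_and] at hv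
          rcases hv with hv | hv
          · exact (Finset.disjoint_left.mp ih hv) hvK
          · omega
    obtain ⟨x, hx⟩ := hKne
    exact (Finset.disjoint_right.mp (hi ▸ key i) hx) (Finset.mem_univ x)
  · intro hno
    by_contra hsync
    -- find a fixed point of actStep among the activeSets
    have hfix : ∃ i, actStep E (h - k) (activeSets E (h - k) S i) = activeSets E (h - k) S i := by
      by_contra hnf
      push_neg at hnf
      have hgrow : ∀ i, i ≤ (activeSets E (h - k) S i).card := by
        intro i
        induction i with
        | zero => exact Nat.zero_le _
        | succ n ih =>
            have hss : activeSets E (h - k) S n ⊂ activeSets E (h - k) S (n + 1) := by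
              rw [activeSets_succ]
              exact (Finset.ssubset_iff_of_subset (subset_actStep E _ _)).mpr
                (by
                  by_contra hc
                  push_neg at hc
                  exact hnf n (Finset.Subset.antisymm (fun x hx => by
                    by_contra hxn
                    exact hxn (hc x hx)) (subset_actStep E _ _)))
            have := Finset.card_lt_card hss
            omega
      have := hgrow (Fintype.card V + 1)
      have hle := Finset.card_le_univ (activeSets E (h - k) S (Fintype.card V + 1))
      omega
    obtain ⟨i, hfixi⟩ := hfix
    set A := activeSets E (h - k) S i with hA
    have hAne : A ≠ Finset.univ := fun hc => hsync ⟨i, hc⟩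
    apply hno
    refine ⟨Finset.univ \ A, ?_, ?_, ?_⟩
    · rw [Finset.sdiff_nonempty]
      intro hc
      exact hAne (Finset.Subset.antisymm (Finset.subset_univ _) hc)
    · intro x hx
      simp only [Finset.mem_sdiff, Finset.mem_univ, true_and] at hx ⊢
      intro hxS
      exact hx (subset_activeSets E (h - k) S i hxS)
    · intro x hx
      simp only [Finset.mem_sdiff, Finset.mem_univ, true_and] at hx
      have hxnot : x ∉ actStep E (h - k) A := by rw [hfixi]; exact hx
      unfold actStep at hxnot
      simp only [Finset.mem_union, Finset.mem_filter, Finset.mem_univ, true_and, not_or,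
        not_le] at hxnot
      have hlt : (A.filter (fun u => E u x)).card < h - k := hxnot.2
      have hsum : (A.filter (fun u => E u x)).card +
          ((Finset.univ \ A).filter (fun u => E u x)).card =
          (Finset.univ.filter (fun u => E u x)).card := by
        rw [← Finset.card_union_of_disjoint]
        · congr 1
          rw [← Finset.filter_union, Finset.union_sdiff_of_subset (Finset.subset_univ A)]
        · exact Finset.disjoint_filter_filter (Finset.disjoint_sdiff)
      rw [hreg x] at hsum
      omega
end

section
/- (Cycle lemma) Let s be a 0-1 sequence of length n with exactly k ones. Then some cyclic rotation of s is a 'path', i.e., encodes a lattice path from (0,0) to (n−k, k) (reading 1 as an up-step and 0 as a right-step) that stays weakly above the straight line from (0,0) to (n−k,k). Moreover, if gcd(n,k) = 1, this rotation is unique: exactly one of the n cyclic rotations of s is a path. -/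
open Finset

/-- Number of ones among the first `i` entries of the 0-1 sequence `s`. -/
def prefOnes {n : ℕ} (s : Fin n → Bool) (i : ℕ) : ℕ :=
  (Finset.univ.filter (fun j : Fin n => (j : ℕ) < i ∧ s j = true)).card

/-- The 0-1 sequence `s` (with `k` ones, `1` read as an up-step and `0` as a
right-step) encodes a lattice path from `(0,0)` to `(n-k,k)` staying weakly above
the straight line joining these points: every prefix with `a` ones and `b` zeros
satisfies `a * (n - k) ≥ b * k`. -/
def isPath {n : ℕ} (k : ℕ) (s : Fin n → Bool) : Prop :=
  ∀ i ≤ n, (i - prefOnes s i) * k ≤ prefOnes s i * (n - k)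

/-- Cyclic rotation of a sequence of length `n` by `r`. -/
def rot {n : ℕ} (r : Fin n) (s : Fin n → Bool) : Fin n → Bool := fun i => s (i + r)

/-- periodic extension -/
private def Sext {n : ℕ} (hn : 0 < n) (s : Fin n → Bool) (t : ℕ) : Bool :=
  s ⟨t % n, Nat.mod_lt t hn⟩

private def cnt {n : ℕ} (hn : 0 < n) (s : Fin n → Bool) (j : ℕ) : ℕ :=
  ((Finset.range j).filter (fun t => Sext hn s t = true)).card

private lemma Sext_per {n : ℕ} (hn : 0 < n) (s : Fin n → Bool) (t : ℕ) :
    Sext hn s (t + n) = Sext hn s t := by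
  simp [Sext, Nat.add_mod_right]

private lemma cnt_succ {n : ℕ} (hn : 0 < n) (s : Fin n → Bool) (j : ℕ) :
    cnt hn s (j + 1) = cnt hn s j + (if Sext hn s j = true then 1 else 0) := by
  rw [cnt, cnt, Finset.range_add_one, Finset.filter_insert]
  split
  · rw [Finset.card_insert_of_notMem (by simp)]
  · simp

private lemma cnt_add_Ico {n : ℕ} (hn : 0 < n) (s : Fin n → Bool) (a b : ℕ) :
    cnt hn s (a + b) = cnt hn s a
      + ((Finset.Ico a (a + b)).filter (fun t => Sext hn s t = true)).card := by
  rw [cnt, cnt, Finset.range_eq_Ico, Finset.range_eq_Ico,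
    ← Finset.Ico_union_Ico_eq_Ico (Nat.zero_le a) (Nat.le_add_right a b),
    Finset.filter_union, Finset.card_union_of_disjoint]
  exact Finset.disjoint_filter_filter (p := fun t => Sext hn s t = true)
    (q := fun t => Sext hn s t = true) (Finset.Ico_disjoint_Ico_consecutive 0 a (a + b))

private lemma cnt_n {n k : ℕ} (hn : 0 < n) (s : Fin n → Bool)
    (hk : (Finset.univ.filter (fun j : Fin n => s j = true)).card = k) :
    cnt hn s n = k := by
  rw [← hk, cnt]
  refine Finset.card_bij' (fun t _ => (⟨t % n, Nat.mod_lt t hn⟩ : Fin n))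
    (fun j _ => (j : ℕ)) ?hi ?hj ?left ?right
  case hi =>
    intro t ht
    simp only [Finset.mem_filter, Finset.mem_range, Sext] at ht ⊢
    exact ⟨Finset.mem_univ _, (Finset.mem_filter.1 ht).2⟩
  case hj =>
    intro j hj
    simp only [Finset.mem_filter, Finset.mem_univ, true_and] at hj
    simp only [Finset.mem_filter, Finset.mem_range]
    refine ⟨j.isLt, ?_⟩
    show Sext hn s (j : ℕ) = true
    rw [Sext]
    convert hj using 2
    exact Fin.ext (Nat.mod_eq_of_lt j.isLt)
  case left =>
    intro t ht
    simp only [Finset.mem_filter, Finset.mem_range] at ht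
    simp [Nat.mod_eq_of_lt ht.1]
  case right =>
    intro j _
    exact Fin.ext (Nat.mod_eq_of_lt j.isLt)

private lemma cnt_add_n {n k : ℕ} (hn : 0 < n) (s : Fin n → Bool)
    (hk : (Finset.univ.filter (fun j : Fin n => s j = true)).card = k) (j : ℕ) :
    cnt hn s (j + n) = cnt hn s j + k := by
  induction j with
  | zero => simpa [cnt] using cnt_n hn s hk
  | succ j ih =>
      have h1 : j + 1 + n = (j + n) + 1 := by ring
      rw [h1, cnt_succ, ih, cnt_succ, Sext_per]
      ring

private def Hf {n : ℕ} (hn : 0 < n) (s : Fin n → Bool) (k : ℕ) (j : ℕ) : ℤ :=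
  (cnt hn s j : ℤ) * n - j * k

private lemma Hf_per {n k : ℕ} (hn : 0 < n) (s : Fin n → Bool)
    (hk : (Finset.univ.filter (fun j : Fin n => s j = true)).card = k) (j : ℕ) :
    Hf hn s k (j + n) = Hf hn s k j := by
  simp only [Hf, cnt_add_n hn s hk]
  push_cast
  ring

private lemma Hf_mod {n k : ℕ} (hn : 0 < n) (s : Fin n → Bool)
    (hk : (Finset.univ.filter (fun j : Fin n => s j = true)).card = k) (j : ℕ) :
    Hf hn s k j = Hf hn s k (j % n) := by
  induction j using Nat.strong_induction_on with
  | _ j ih =>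
    rcases lt_or_ge j n with h | h
    · rw [Nat.mod_eq_of_lt h]
    · have h1 : j - n + n = j := Nat.sub_add_cancel h
      have h2 : j - n < j := Nat.sub_lt (lt_of_lt_of_le hn h) hn
      rw [← h1, Hf_per hn s hk, ih _ h2, Nat.add_mod_right]

private lemma prefOnes_le {n : ℕ} (s : Fin n → Bool) (i : ℕ) :
    prefOnes s i ≤ i := by
  rw [prefOnes]
  have h : (Finset.univ.filter (fun j : Fin n => (j : ℕ) < i ∧ s j = true)).card
      ≤ (Finset.range i).card := by
    refine Finset.card_le_card_of_injOn (fun j => (j : ℕ)) ?_ ?_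
    · intro j hj
      rw [Finset.mem_coe, Finset.mem_filter] at hj
      exact Finset.mem_range.2 hj.2.1
    · intro a _ b _ h
      exact Fin.ext h
  simpa using h

private lemma pref_rot {n : ℕ} (hn : 0 < n) (s : Fin n → Bool) (r : Fin n) (i : ℕ)
    (hi : i ≤ n) :
    cnt hn s ((r : ℕ) + i) = cnt hn s (r : ℕ) + prefOnes (rot r s) i := by
  rw [cnt_add_Ico]
  congr 1
  rw [prefOnes]
  refine Finset.card_bij'
    (fun t ht => (⟨t - (r : ℕ), by
      have := (Finset.mem_Ico.1 (Finset.mem_filter.1 ht).1)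
      omega⟩ : Fin n))
    (fun j _ => (r : ℕ) + (j : ℕ)) ?hi ?hj ?left ?right
  case hi =>
    intro t ht
    simp only [Finset.mem_filter, Finset.mem_Ico] at ht
    obtain ⟨⟨h1, h2⟩, h3⟩ := ht
    simp only [Finset.mem_filter, Finset.mem_univ, true_and]
    constructor
    · show t - (r : ℕ) < i; omega
    · show rot r s _ = true
      rw [rot]
      have : ((⟨t - (r : ℕ), by omega⟩ : Fin n) + r) = (⟨t % n, Nat.mod_lt t hn⟩ : Fin n) := by
        apply Fin.ext
        rw [Fin.val_add]
        simp only
        congr 1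
        omega
      rw [this]
      exact h3
  case hj =>
    intro j hj
    simp only [Finset.mem_filter, Finset.mem_univ, true_and] at hj
    obtain ⟨h1, h2⟩ := hj
    simp only [Finset.mem_filter, Finset.mem_Ico]
    refine ⟨⟨Nat.le_add_right _ _, by omega⟩, ?_⟩
    show Sext hn s ((r : ℕ) + (j : ℕ)) = true
    rw [Sext]
    rw [rot] at h2
    have : (⟨((r : ℕ) + (j : ℕ)) % n, Nat.mod_lt _ hn⟩ : Fin n) = j + r := by
      apply Fin.ext
      rw [Fin.val_add]
      simp only
      congr 1
      omega
    rw [this]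
    exact h2
  case left =>
    intro t ht
    simp only [Finset.mem_filter, Finset.mem_Ico] at ht
    simp only
    omega
  case right =>
    intro j hj
    simp only [Finset.mem_filter, Finset.mem_univ, true_and] at hj
    apply Fin.ext
    simp only
    omega

private lemma path_iff {n k : ℕ} (hn : 0 < n) (s : Fin n → Bool) (hkn : k ≤ n)
    (r : Fin n) :
    isPath k (rot r s) ↔ ∀ i ≤ n, Hf hn s k (r : ℕ) ≤ Hf hn s k ((r : ℕ) + i) := by
  rw [isPath]
  apply forall_congr'
  intro i
  apply imp_congr_right
  intro hi
  set p := prefOnes (rot r s) i with hp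
  have hpi : p ≤ i := prefOnes_le _ _
  have hH : Hf hn s k ((r : ℕ) + i) - Hf hn s k (r : ℕ)
      = (p : ℤ) * n - i * k := by
    rw [Hf, Hf, pref_rot hn s r i hi]
    push_cast
    ring
  constructor
  · intro h
    have h' : (i : ℤ) * k ≤ (p : ℤ) * n := by
      have := h
      zify [hpi, hkn] at this
      nlinarith
    linarith
  · intro h
    have h' : (i : ℤ) * k ≤ (p : ℤ) * n := by linarith
    zify [hpi, hkn]
    nlinarith

/-- Cycle lemma: every 0-1 sequence of length `n` with `k` ones has a cyclic
rotation which is a path; if `gcd(n,k) = 1` this rotation is unique. -/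
theorem stmt_11 (n k : ℕ) (hn : 0 < n) (s : Fin n → Bool)
    (hk : (Finset.univ.filter (fun j : Fin n => s j = true)).card = k) :
    (∃ r : Fin n, isPath k (rot r s)) ∧
    (Nat.gcd n k = 1 → ∃! r : Fin n, isPath k (rot r s)) := by
  have hkn : k ≤ n := by
    rw [← hk]
    exact le_trans (Finset.card_filter_le _ _) (by simp)
  -- global minimum characterization
  have glob_iff : ∀ r : Fin n, isPath k (rot r s) ↔
      ∀ j : ℕ, Hf hn s k (r : ℕ) ≤ Hf hn s k j := by
    intro r
    rw [path_iff hn s hkn r]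
    constructor
    · intro h j
      rw [Hf_mod hn s hk j]
      set m := j % n with hm
      have hmn : m < n := Nat.mod_lt _ hn
      rcases le_or_gt (r : ℕ) m with hc | hc
      · have := h (m - (r : ℕ)) (by omega)
        rwa [Nat.add_sub_cancel' hc] at this
      · have := h (m + n - (r : ℕ)) (by omega)
        rw [show (r : ℕ) + (m + n - (r : ℕ)) = m + n by omega, Hf_per hn s hk] at this
        exact this
    · intro h i _
      exact h _
  -- a minimizer exists
  obtain ⟨r0, hr0m, hr0⟩ := Finset.exists_min_image (Finset.range n)
    (fun j => Hf hn s k j) ⟨0, Finset.mem_range.2 hn⟩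
  have hr0n : r0 < n := Finset.mem_range.1 hr0m
  have hglob : ∀ j : ℕ, Hf hn s k r0 ≤ Hf hn s k j := by
    intro j
    rw [Hf_mod hn s hk j]
    exact hr0 _ (Finset.mem_range.2 (Nat.mod_lt _ hn))
  have hex : isPath k (rot (⟨r0, hr0n⟩ : Fin n) s) := (glob_iff _).2 hglob
  refine ⟨⟨_, hex⟩, ?_⟩
  intro hcop
  refine ⟨⟨r0, hr0n⟩, hex, ?_⟩
  intro r' hr'
  -- both are global minima, hence equal values
  have h1 := (glob_iff r').1 hr'
  have heq : Hf hn s k (r' : ℕ) = Hf hn s k r0 :=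
    le_antisymm (h1 r0) (hglob (r' : ℕ))
  -- deduce n ∣ (r' - r0) * k
  have hdvd : (n : ℤ) ∣ ((r' : ℤ) - r0) * k := by
    refine ⟨(cnt hn s (r' : ℕ) : ℤ) - cnt hn s r0, ?_⟩
    have h2 := heq
    rw [Hf, Hf] at h2
    linear_combination -h2
  have hcop' : IsCoprime (n : ℤ) (k : ℤ) := by
    rw [Int.isCoprime_iff_gcd_eq_one, Int.gcd_natCast_natCast]
    exact hcop
  have hdvd2 : (n : ℤ) ∣ ((r' : ℤ) - r0) := hcop'.dvd_of_dvd_mul_right hdvd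
  have habs : |((r' : ℤ) - r0)| < n := by
    have h3 := r'.isLt
    rw [abs_lt]
    omega
  have : ((r' : ℤ) - r0) = 0 := Int.eq_zero_of_abs_lt_dvd hdvd2 habs
  apply Fin.ext
  simp only [Fin.val_mk]
  omega
end

section
/- For p prime and 2 ≤ k ≤ p−1, the girth (minimum directed cycle length) of the Cayley digraph Cay(C_p, {a, a^k}) equals min over w ∈ {1,…,p} of ( p·⌈wk/p⌉ − w(k−1) ). Equivalently, the girth equals the minimum of z + w over nonnegative integers z, w, not both zero, with z + wk ≡ 0 (mod p). -/
open Finset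

section Aux

variable (p k : ℕ)

lemma aux_cast (hp : 0 < p) (z w : ℕ) :
    ((z : ZMod p) + (w : ZMod p) * (k : ZMod p) = 0) ↔ p ∣ z + w * k := by
  haveI : NeZero p := ⟨hp.ne'⟩
  rw [← ZMod.natCast_eq_zero_iff]
  push_cast
  rfl

lemma aux_cycle_mem (m : ℕ)
    (hm : hasCycle (fun x y : ZMod p => y = 1 + x ∨ y = (k : ZMod p) + x) m) :
    ∃ z w : ℕ, ¬(z = 0 ∧ w = 0) ∧ m = z + w ∧
      (z : ZMod p) + (w : ZMod p) * (k : ZMod p) = 0 := by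
  classical
  obtain ⟨hm0, c, hinj, hE⟩ := hm
  haveI : NeZero m := ⟨hm0.ne'⟩
  set P : ZMod m → Prop := fun i => c (i + 1) = 1 + c i with hP
  have hcard := Finset.card_filter_add_card_filter_not
    (s := (Finset.univ : Finset (ZMod m))) (p := P)
  rw [Finset.card_univ, ZMod.card] at hcard
  refine ⟨(Finset.univ.filter P).card,
    (Finset.univ.filter (fun a => ¬ P a)).card, ?_, by omega, ?_⟩
  · intro ⟨h1, h2⟩
    omega
  · have hsum0 : ∑ i : ZMod m, (c (i + 1) - c i) = 0 := by
      have h1 : ∑ i : ZMod m, c (i + 1) = ∑ i : ZMod m, c i :=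
        Fintype.sum_equiv (Equiv.addRight (1 : ZMod m)) _ _ (fun i => rfl)
      rw [Finset.sum_sub_distrib, h1, sub_self]
    have hterm : ∀ i : ZMod m, c (i + 1) - c i =
        (if P i then (1 : ZMod p) else (k : ZMod p)) := by
      intro i
      by_cases h : P i
      · rw [if_pos h, h]; ring
      · rw [if_neg h]
        rcases hE i with h' | h'
        · exact absurd h' h
        · rw [h']; ring
    rw [Finset.sum_congr rfl (fun i _ => hterm i), Finset.sum_ite,
      Finset.sum_const, Finset.sum_const] at hsum0
    simpa [nsmul_eq_mul, mul_comm] using hsum0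

lemma aux_exists_cycle (hp : 0 < p) (z w : ℕ)
    (hdvd : p ∣ z + w * k) (hm0 : 0 < z + w)
    (hmin : ∀ z' w' : ℕ, ¬(z' = 0 ∧ w' = 0) → p ∣ z' + w' * k → z + w ≤ z' + w') :
    hasCycle (fun x y : ZMod p => y = 1 + x ∨ y = (k : ZMod p) + x) (z + w) := by
  haveI : NeZero p := ⟨hp.ne'⟩
  set m := z + w with hmdef
  haveI : NeZero m := ⟨hm0.ne'⟩
  set g : ℕ → ZMod p := fun n => ((min n z + (n - z) * k : ℕ) : ZMod p) with hg
  have hcast0 : ((z + w * k : ℕ) : ZMod p) = 0 :=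
    (ZMod.natCast_eq_zero_iff _ _).mpr hdvd
  refine ⟨hm0, fun i => g i.val, ?_, ?_⟩
  · -- injectivity
    have key : ∀ a b : ℕ, a ≤ b → b < m → g a = g b → a = b := by
      intro a b hab hbm hgab
      by_contra hne
      have hlt : a < b := lt_of_le_of_ne hab hne
      set z' := min b z - min a z with hz'
      set w' := (b - z) - (a - z) with hw'
      have hmono : (a - z) * k ≤ (b - z) * k := Nat.mul_le_mul_right _ (by omega)
      have hle : min a z + (a - z) * k ≤ min b z + (b - z) * k := by omega
      have hmod : (min a z + (a - z) * k) ≡ (min b z + (b - z) * k) [MOD p] :=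
        (ZMod.natCast_eq_natCast_iff _ _ _).mp hgab
      have hdvd' : p ∣ (min b z + (b - z) * k) - (min a z + (a - z) * k) :=
        (Nat.modEq_iff_dvd' hle).mp hmod
      have hmulsub : (b - z) * k - (a - z) * k = w' * k :=
        (Nat.sub_mul (b - z) (a - z) k).symm
      have heq : (min b z + (b - z) * k) - (min a z + (a - z) * k) = z' + w' * k := by
        omega
      rw [heq] at hdvd'
      have hzw' : z' + w' = b - a := by omega
      have hnz : ¬(z' = 0 ∧ w' = 0) := by omega
      have := hmin z' w' hnz hdvd'
      omega
    intro i j hij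
    rcases le_total i.val j.val with h | h
    · exact ZMod.val_injective m (key _ _ h (ZMod.val_lt j) hij)
    · exact ZMod.val_injective m (key _ _ h (ZMod.val_lt i) hij.symm).symm
  · -- edges
    intro i
    have hv : i.val < m := ZMod.val_lt i
    have h1v : (i + 1).val = (i.val + 1) % m := by
      rw [ZMod.val_add, ZMod.val_one_eq_one_mod, Nat.add_mod i.val 1 m,
        Nat.mod_eq_of_lt hv]
    set v := i.val with hvdef
    by_cases hcase : v + 1 < m
    · rw [Nat.mod_eq_of_lt hcase] at h1v
      by_cases hvz : v + 1 ≤ z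
      · left
        show g (i + 1).val = 1 + g i.val
        simp only [hg, h1v]
        have e1 : min (v + 1) z = v + 1 := by omega
        have e2 : min v z = v := by omega
        have e3 : v + 1 - z = 0 := by omega
        have e4 : v - z = 0 := by omega
        rw [e1, e2, e3, e4]
        push_cast
        ring
      · right
        show g (i + 1).val = (k : ZMod p) + g i.val
        simp only [hg, h1v]
        have e1 : min (v + 1) z = z := by omega
        have e2 : min v z = z := by omega
        have e3 : v + 1 - z = (v - z) + 1 := by omega
        rw [e1, e2, e3]
        push_cast
        ring
    · -- wrap-around
      have hvm : v + 1 = m := by omega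
      have h0 : (i + 1).val = 0 := by
        rw [h1v, hvm, Nat.mod_self]
      have hg0 : g (i + 1).val = 0 := by
        rw [h0]; simp [hg]
      by_cases hw : w = 0
      · left
        show g (i + 1).val = 1 + g i.val
        rw [hg0]
        simp only [hg]
        have e1 : min v z = v := by omega
        have e2 : v - z = 0 := by omega
        rw [e1, e2]
        rw [← hcast0]
        have hwk : w * k = 0 := by rw [hw]; ring
        have hnat : z + w * k = (v + 0 * k) + 1 := by omega
        rw [hnat]
        push_cast
        ring
      · right
        show g (i + 1).val = (k : ZMod p) + g i.val
        rw [hg0]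
        simp only [hg]
        have hvge : z ≤ v := by omega
        have e1 : min v z = z := by omega
        have e2 : v - z = w - 1 := by omega
        rw [e1, e2]
        rw [← hcast0]
        have hnat : z + w * k = (z + (w - 1) * k) + k := by
          have : (w - 1) * k + k = w * k := by
            rw [← Nat.succ_mul]; congr 1; omega
          omega
        rw [hnat]
        push_cast
        ring

end Aux

/-- The girth of `Cay(C_p, {a, a^k})` equals
`min_{w ∈ {1,…,p}} (p * ⌈w k / p⌉ - w (k - 1))`, and equivalently equals the
minimum of `z + w` over nonnegative `z, w`, not both zero, with `z + w k ≡ 0 (mod p)`. -/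
theorem stmt_14 (p k : ℕ) (hp : p.Prime) (hk2 : 2 ≤ k) (hkp : k ≤ p - 1) :
    sInf {m | hasCycle (fun x y : ZMod p => y = 1 + x ∨ y = (k : ZMod p) + x) m} =
      sInf {v | ∃ w : ℕ, 1 ≤ w ∧ w ≤ p ∧
        v = p * ((w * k + p - 1) / p) - w * (k - 1)} ∧
    sInf {m | hasCycle (fun x y : ZMod p => y = 1 + x ∨ y = (k : ZMod p) + x) m} =
      sInf {l | ∃ z w : ℕ, ¬(z = 0 ∧ w = 0) ∧ l = z + w ∧
        (z : ZMod p) + (w : ZMod p) * (k : ZMod p) = 0} := by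
  haveI : NeZero p := ⟨hp.pos.ne'⟩
  have hp3 : 3 ≤ p := by
    have := hp.two_le; omega
  set C := {m | hasCycle (fun x y : ZMod p => y = 1 + x ∨ y = (k : ZMod p) + x) m}
    with hCdef
  set A := {v | ∃ w : ℕ, 1 ≤ w ∧ w ≤ p ∧
    v = p * ((w * k + p - 1) / p) - w * (k - 1)} with hAdef
  set B := {l | ∃ z w : ℕ, ¬(z = 0 ∧ w = 0) ∧ l = z + w ∧
    (z : ZMod p) + (w : ZMod p) * (k : ZMod p) = 0} with hBdef
  have hpB : p ∈ B := by
    refine ⟨p, 0, by simp [hp.pos.ne'], by simp, ?_⟩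
    simp
  have hBne : B.Nonempty := ⟨p, hpB⟩
  set m₀ := sInf B with hm₀def
  have hm₀B : m₀ ∈ B := Nat.sInf_mem hBne
  obtain ⟨z, w, hzw0, hm₀eq, hzwc⟩ := hm₀B
  have hdvd : p ∣ z + w * k := (aux_cast p k hp.pos z w).mp hzwc
  have hm₀pos : 0 < m₀ := by omega
  have hm₀p : m₀ ≤ p := Nat.sInf_le hpB
  have hmin : ∀ z' w' : ℕ, ¬(z' = 0 ∧ w' = 0) → p ∣ z' + w' * k → m₀ ≤ z' + w' :=
    fun z' w' h1 h2 => Nat.sInf_le ⟨z', w', h1, rfl, (aux_cast p k hp.pos z' w').mpr h2⟩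
  -- the minimum of B is a cycle length
  have hm₀C : m₀ ∈ C := by
    rw [hCdef, Set.mem_setOf_eq, hm₀eq]
    exact aux_exists_cycle p k hp.pos z w hdvd (by omega)
      (fun z' w' h1 h2 => hm₀eq ▸ hmin z' w' h1 h2)
  -- every cycle length is in B
  have hCB : ∀ m ∈ C, m₀ ≤ m := by
    intro m hm
    obtain ⟨z', w', h1, h2, h3⟩ := aux_cycle_mem p k m hm
    rw [h2]
    exact hmin z' w' h1 ((aux_cast p k hp.pos z' w').mp h3)
  have hCinf : sInf C = m₀ :=
    le_antisymm (Nat.sInf_le hm₀C) (hCB _ (Nat.sInf_mem ⟨m₀, hm₀C⟩))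
  -- every element of A is in B
  have hAB : A ⊆ B := by
    intro v hv
    obtain ⟨u, hu1, hup, hveq⟩ := hv
    set c := (u * k + p - 1) / p with hcdef
    have hdm := Nat.div_add_mod (u * k + p - 1) p
    have hr : (u * k + p - 1) % p < p := Nat.mod_lt _ hp.pos
    rw [← hcdef] at hdm
    have hge : u * k ≤ p * c := by omega
    have hlt : p * c < u * k + p := by omega
    have huk : u * (k - 1) + u = u * k := by
      rw [← Nat.mul_succ]; congr 1; omega
    refine ⟨p * c - u * k, u, by omega, by omega, ?_⟩
    refine (aux_cast p k hp.pos _ _).mpr ?_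
    have : p * c - u * k + u * k = p * c := by omega
    rw [this]
    exact dvd_mul_right p c
  -- the minimum of B is in A
  have hm₀A : m₀ ∈ A := by
    by_cases hw : w = 0
    · -- then m₀ = p
      have hzm : z = m₀ := by omega
      have hwk : w * k = 0 := by rw [hw]; ring
      have hpz : p ∣ z := by
        have : z + w * k = z := by omega
        rwa [this] at hdvd
      have hzpos : 0 < z := by omega
      have hm₀eqp : m₀ = p := by
        have := Nat.le_of_dvd hzpos hpz
        omega
      refine ⟨p, hp.pos, le_refl p, ?_⟩
      have h1 : p * k + p - 1 = p * k + (p - 1) := by omega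
      have h2 : (p * k + (p - 1)) / p = k + (p - 1) / p := Nat.mul_add_div hp.pos k (p - 1)
      have h3 : (p - 1) / p = 0 := Nat.div_eq_of_lt (by omega)
      have h4 : p * (k - 1) + p = p * k := by
        rw [← Nat.mul_succ]; congr 1; omega
      rw [h1, h2, h3, Nat.add_zero, hm₀eqp]
      omega
    · -- w ≥ 1; first show w ≤ p
      have hw1 : 1 ≤ w := by omega
      have hwp : w ≤ p := by
        by_contra hcon
        push_neg at hcon
        have hk' : (w - p) * k + p * k = w * k := by
          rw [← Nat.add_mul]; congr 1; omega
        have h2 : p ∣ z + (w - p) * k := by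
          have h4 := Nat.dvd_sub hdvd (dvd_mul_right p k)
          have h5 : z + w * k - p * k = z + (w - p) * k := by omega
          rwa [h5] at h4
        have := hmin z (w - p) (by omega) h2
        omega
      set c := (w * k + p - 1) / p with hcdef
      have hdm := Nat.div_add_mod (w * k + p - 1) p
      have hr : (w * k + p - 1) % p < p := Nat.mod_lt _ hp.pos
      rw [← hcdef] at hdm
      have hge : w * k ≤ p * c := by omega
      have hlt : p * c < w * k + p := by omega
      set zw := p * c - w * k with hzwdef
      have hzwlt : zw < p := by omega
      have hdvdw : p ∣ zw + w * k := by
        have : zw + w * k = p * c := by omega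
        rw [this]; exact dvd_mul_right p c
      have hzle : z ≤ zw := by
        have := hmin zw w (by omega) hdvdw
        omega
      have hzeq : z = zw := by
        have h4 := Nat.dvd_sub hdvdw hdvd
        have h5 : zw + w * k - (z + w * k) = zw - z := by omega
        rw [h5] at h4
        rcases Nat.eq_zero_or_pos (zw - z) with h | h
        · omega
        · have := Nat.le_of_dvd h h4
          omega
      have huk : w * (k - 1) + w = w * k := by
        rw [← Nat.mul_succ]; congr 1; omega
      refine ⟨w, hw1, hwp, ?_⟩
      rw [← hcdef]
      omega
  have hAinf : sInf A = m₀ := by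
    refine le_antisymm (Nat.sInf_le hm₀A) ?_
    have hAmem : sInf A ∈ A := Nat.sInf_mem ⟨m₀, hm₀A⟩
    exact Nat.sInf_le (hAB hAmem)
  exact ⟨hCinf.trans hAinf.symm, hCinf.trans hm₀def⟩
end

section
/- In the Cayley digraph Cay(C₁₁, {a, a⁶}), the girth equals 6 (witnessed by the directed cycle (1, a⁶, a⁷, a⁸, a⁹, a¹⁰)); consequently with threshold t = 2, d_{s,2} = 11 − s for all s > 5. -/
open Finset

/-! ### Auxiliary material -/

abbrev E11 : ZMod 11 → ZMod 11 → Prop := fun x y => y = 1 + x ∨ y = 6 + x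

def cstep (S : Finset (ZMod 11)) : Finset (ZMod 11) :=
  S ∪ Finset.univ.filter (fun v => 2 ≤ (S.filter (fun u => E11 u v)).card)

lemma actStep_eq : actStep E11 2 = cstep := by
  funext S
  simp only [actStep, cstep]
  congr!

lemma activeSets_eq (S : Finset (ZMod 11)) (n : ℕ) :
    activeSets E11 2 S n = cstep^[n] S := by
  rw [activeSets, actStep_eq]

/-- The explicit 6-cycle. -/
def c6 : ZMod 6 → ZMod 11 := fun i => if i.val = 0 then 0 else ((5 + i.val : ℕ) : ZMod 11)

lemma arith_aux (k m l q : ℕ) (h1 : k + m = l) (h2 : 0 < l) (h3 : l < 6)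
    (h4 : 6 * k + m = 11 * q) : False := by omega

lemma girth_lb : ∀ l, hasCycle E11 l → 6 ≤ l := by
  intro l h
  obtain ⟨hl, c, -, hc⟩ := h
  by_contra hlt
  push_neg at hlt
  haveI : NeZero l := ⟨hl.ne'⟩
  classical
  set P : ZMod l → Prop := fun i => c (i + 1) = 6 + c i with hP
  set k := (Finset.univ.filter P).card with hk
  set m := (Finset.univ.filter (fun i => ¬ P i)).card with hm
  have hkm : k + m = l := by
    rw [hk, hm, Finset.card_filter_add_card_filter_not, Finset.card_univ, ZMod.card]
  have h0 : ∑ i : ZMod l, (c (i + 1) - c i) = 0 := by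
    rw [Finset.sum_sub_distrib, sub_eq_zero]
    exact Fintype.sum_equiv (Equiv.addRight (1 : ZMod l)) _ _ (fun i => rfl)
  have hsplit : ∑ i ∈ Finset.univ.filter P, (c (i + 1) - c i)
      + ∑ i ∈ Finset.univ.filter (fun i => ¬ P i), (c (i + 1) - c i)
      = ∑ i : ZMod l, (c (i + 1) - c i) :=
    Finset.sum_filter_add_sum_filter_not _ _ _
  have h1 : ∑ i ∈ Finset.univ.filter P, (c (i + 1) - c i) = k • (6 : ZMod 11) := by
    rw [hk, ← Finset.sum_const]
    refine Finset.sum_congr rfl (fun i hi => ?_)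
    rw [Finset.mem_filter] at hi
    rw [hi.2]; ring
  have h2 : ∑ i ∈ Finset.univ.filter (fun i => ¬ P i), (c (i + 1) - c i)
      = m • (1 : ZMod 11) := by
    rw [hm, ← Finset.sum_const]
    refine Finset.sum_congr rfl (fun i hi => ?_)
    rw [Finset.mem_filter] at hi
    have := (hc i).resolve_right hi.2
    rw [this]; ring
  have hz : ((6 * k + m : ℕ) : ZMod 11) = 0 := by
    push_cast
    rw [← h0, ← hsplit, h1, h2, nsmul_eq_mul, nsmul_eq_mul]
    push_cast
    ring
  rw [ZMod.natCast_eq_zero_iff] at hz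
  obtain ⟨q, hq⟩ := hz
  exact arith_aux k m l q hkm hl hlt hq

lemma exists_activator (S : Finset (ZMod 11)) (h6 : 6 ≤ S.card) (hne : S ≠ Finset.univ) :
    ∃ v, v ∉ S ∧ v - 1 ∈ S ∧ v - 6 ∈ S := by
  by_contra hcon
  push_neg at hcon
  set T : Finset (ZMod 11) := Sᶜ with hT
  have hSlt : S.card < 11 := by
    have h1 := Finset.card_le_univ S
    rw [ZMod.card] at h1
    refine lt_of_le_of_ne h1 (fun h => hne ?_)
    exact Finset.eq_univ_of_card S (by rw [ZMod.card]; exact h)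
  have hTne : T.Nonempty := by
    rw [hT, ← Finset.card_pos, Finset.card_compl, ZMod.card]
    omega
  have hTcard : T.card ≤ 5 := by
    rw [hT, Finset.card_compl, ZMod.card]; omega
  have hTmem : ∀ v ∈ T, v - 1 ∈ T ∨ v - 6 ∈ T := by
    intro v hv
    rw [hT, Finset.mem_compl] at hv
    rcases em (v - 1 ∈ S) with h1 | h1
    · right; rw [hT, Finset.mem_compl]; exact hcon v hv h1
    · left; rw [hT, Finset.mem_compl]; exact h1
  -- predecessor function on the complement
  let T' := {x : ZMod 11 // x ∈ T}
  let f : T' → T' := fun x =>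
    if h : (x.1 - 1) ∈ T then ⟨x.1 - 1, h⟩
    else ⟨x.1 - 6, (hTmem x.1 x.2).resolve_left h⟩
  have hf : ∀ x : T', E11 (f x).1 x.1 := by
    intro x
    by_cases h : (x.1 - 1) ∈ T
    · left; simp only [f, dif_pos h]; ring
    · right; simp only [f, dif_neg h]; ring
  obtain ⟨v0, hv0⟩ := hTne
  let x₀ : T' := ⟨v0, hv0⟩
  obtain ⟨a, b, hab, heq⟩ := Finite.exists_ne_map_eq_of_infinite (fun n : ℕ => f^[n] x₀)
  rcases hab.lt_or_gt with hlt' | hlt'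
  all_goals {
    first
    | (have key : ∃ (x : T') (n : ℕ), 0 < n ∧ f^[n] x = x := by
        refine ⟨f^[a] x₀, b - a, by omega, ?_⟩
        rw [← Function.iterate_add_apply]
        have hba : b - a + a = b := by omega
        rw [hba]; exact heq.symm)
    | (have key : ∃ (x : T') (n : ℕ), 0 < n ∧ f^[n] x = x := by
        refine ⟨f^[b] x₀, a - b, by omega, ?_⟩
        rw [← Function.iterate_add_apply]
        have hba : a - b + b = a := by omega
        rw [hba]; exact heq)
    obtain ⟨x, n, hn, hnx⟩ := key
    set p := Function.minimalPeriod f x with hp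
    have hper : Function.IsPeriodicPt f n x := hnx
    have hp0 : 0 < p := hper.minimalPeriod_pos hn
    have hppt : f^[p] x = x := Function.iterate_minimalPeriod
    have hinjOn : Set.InjOn (f^[·] x) (Set.Iio p) :=
      Function.iterate_injOn_Iio_minimalPeriod
    have hple : p ≤ T.card := by
      have hcard : (Finset.range p).card ≤ (Finset.univ : Finset T').card := by
        apply Finset.card_le_card_of_injOn (fun n => f^[n] x)
        · intro _ _; exact Finset.mem_univ _
        · intro a' ha' b' hb' hab'
          exact hinjOn (Finset.mem_range.mp ha') (Finset.mem_range.mp hb') hab'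
      rwa [Finset.card_range, Finset.card_univ, Fintype.card_coe] at hcard
    haveI : NeZero p := ⟨hp0.ne'⟩
    have hcyc : hasCycle E11 p := by
      refine ⟨hp0, fun i : ZMod p => (f^[p - 1 - i.val] x).1, ?_, ?_⟩
      · intro i j hij
        have hi := ZMod.val_lt i
        have hj := ZMod.val_lt j
        have h1 : f^[p - 1 - i.val] x = f^[p - 1 - j.val] x := Subtype.ext hij
        have h2 : p - 1 - i.val = p - 1 - j.val :=
          hinjOn (by simp; omega) (by simp; omega) h1
        exact ZMod.val_injective p (by omega)
      · intro i
        show E11 (f^[p - 1 - i.val] x).1 (f^[p - 1 - (i + 1).val] x).1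
        have hi := ZMod.val_lt i
        have hadd : i + 1 = ((i.val + 1 : ℕ) : ZMod p) := by
          push_cast [ZMod.natCast_zmod_val]
          rfl
        by_cases hcase : i.val + 1 < p
        · have hv1 : (i + 1).val = i.val + 1 := by
            rw [hadd, ZMod.val_cast_of_lt hcase]
          rw [hv1]
          have hstep : p - 1 - i.val = (p - 1 - (i.val + 1)) + 1 := by omega
          rw [hstep, Function.iterate_succ_apply']
          exact hf _
        · have hival : i.val = p - 1 := by omega
          have hv1 : (i + 1).val = 0 := by
            rw [hadd]
            have hz : ((i.val + 1 : ℕ) : ZMod p) = 0 := by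
              rw [show i.val + 1 = p by omega, ZMod.natCast_self]
            rw [hz, ZMod.val_zero]
          rw [hv1, hival]
          have h1 : p - 1 - (p - 1) = 0 := by omega
          have h3 : p - 1 - 0 = p - 1 := by omega
          rw [h1, h3, Function.iterate_zero_apply]
          have h5 := hf (f^[p - 1] x)
          rw [← Function.iterate_succ_apply' f (p - 1) x] at h5
          rw [show (p - 1).succ = p by omega, hppt] at h5
          exact h5
    exact absurd (girth_lb p hcyc) (by omega) }

lemma card_lt_cstep (S : Finset (ZMod 11)) (h6 : 6 ≤ S.card) (hne : S ≠ Finset.univ) :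
    S.card < (cstep S).card := by
  obtain ⟨v, hv, h1, h6'⟩ := exists_activator S h6 hne
  apply Finset.card_lt_card
  refine ⟨Finset.subset_union_left, fun hsub => hv ?_⟩
  apply hsub
  rw [cstep, Finset.mem_union]
  right
  rw [Finset.mem_filter]
  refine ⟨Finset.mem_univ _, ?_⟩
  have hpair : ({v - 1, v - 6} : Finset (ZMod 11)) ⊆ S.filter (fun u => E11 u v) := by
    intro u hu
    rw [Finset.mem_insert, Finset.mem_singleton] at hu
    rcases hu with rfl | rfl
    · rw [Finset.mem_filter]; exact ⟨h1, Or.inl (by ring)⟩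
    · rw [Finset.mem_filter]; exact ⟨h6', Or.inr (by ring)⟩
  have hne2 : v - 1 ≠ v - 6 := by
    intro h
    have h16 : (1 : ZMod 11) = 6 := sub_right_injective h
    exact absurd h16 (by decide)
  calc 2 = ({v - 1, v - 6} : Finset (ZMod 11)).card := by
        rw [Finset.card_insert_of_notMem (by simpa using hne2), Finset.card_singleton]
    _ ≤ _ := Finset.card_le_card hpair

lemma reach_univ : ∀ n (S : Finset (ZMod 11)), 6 ≤ S.card → 11 ≤ S.card + n →
    activeSets E11 2 S n = Finset.univ := by
  intro n
  induction n with
  | zero =>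
    intro S h6 h11
    rw [activeSets, Function.iterate_zero_apply]
    refine Finset.eq_univ_of_card S ?_
    have h1 := Finset.card_le_univ S
    rw [ZMod.card] at h1
    rw [ZMod.card]; omega
  | succ n ih =>
    intro S h6 h11
    rw [activeSets_eq, Function.iterate_succ_apply, ← activeSets_eq]
    by_cases hne : S = Finset.univ
    · subst hne
      have hu : cstep Finset.univ = Finset.univ :=
        Finset.univ_subset_iff.mp Finset.subset_union_left
      rw [hu]
      apply ih <;> rw [Finset.card_univ, ZMod.card] <;> omega
    · have hlt := card_lt_cstep S h6 hne
      have hsub : S ⊆ cstep S := Finset.subset_union_left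
      apply ih <;> omega

lemma syncTime_le_of {V : Type*} [Fintype V] {E : V → V → Prop} {t : ℕ}
    {S : Finset V} {n : ℕ} (h : activeSets E t S n = Finset.univ) :
    syncTime E t S ≤ (n : ℕ∞) := by
  classical
  rw [syncTime, dif_pos ⟨n, h⟩]
  exact_mod_cast Nat.find_le h

lemma activeSets_mono {V : Type*} [Fintype V] {E : V → V → Prop} {t : ℕ}
    {S : Finset V} {i j : ℕ} (hij : i ≤ j) :
    activeSets E t S i ⊆ activeSets E t S j := by
  induction j with
  | zero => rw [Nat.le_zero.mp hij]
  | succ j ih =>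
    rcases Nat.lt_or_ge i (j + 1) with h | h
    · refine (ih (by omega)).trans ?_
      rw [activeSets, activeSets, Function.iterate_succ_apply']
      exact subset_actStep _ _ _
    · rw [show i = j + 1 by omega]

lemma lt_syncTime_of {V : Type*} [Fintype V] {E : V → V → Prop} {t : ℕ}
    {S : Finset V} {n : ℕ} (h : activeSets E t S n ≠ Finset.univ) :
    (n : ℕ∞) < syncTime E t S := by
  classical
  rw [syncTime]
  split_ifs with hex
  · rw [Nat.cast_lt]
    by_contra hle
    push_neg at hle
    exact h (Finset.univ_subset_iff.mp (Nat.find_spec hex ▸ activeSets_mono hle))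
  · exact lt_top_iff_ne_top.mpr (ENat.coe_ne_top n)

lemma cast_succ_le {a : ℕ} {x : ℕ∞} (h : (a : ℕ∞) < x) : ((a + 1 : ℕ) : ℕ∞) ≤ x := by
  induction x using ENat.recTopCoe with
  | top => exact le_top
  | coe m =>
    rw [Nat.cast_lt] at h
    exact_mod_cast Nat.succ_le_of_lt h

lemma hd_upper (s' : ℕ) (hs' : 6 ≤ s') : higherDiam E11 2 s' ≤ ((11 - s' : ℕ) : ℕ∞) := by
  apply iSup_le
  rintro ⟨S, hS⟩
  exact syncTime_le_of (reach_univ (11 - s') S (hS ▸ hs') (by omega))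

lemma hd_lower (s' : ℕ) (W : Finset (ZMod 11)) (hW : W.card = s')
    (hne : cstep^[11 - s' - 1] W ≠ Finset.univ) (hs' : s' ≤ 10) :
    ((11 - s' : ℕ) : ℕ∞) ≤ higherDiam E11 2 s' := by
  have h1 : activeSets E11 2 W (11 - s' - 1) ≠ Finset.univ := by
    rw [activeSets_eq]; exact hne
  have h2 := cast_succ_le (lt_syncTime_of h1)
  have h3 : (11 - s' - 1) + 1 = 11 - s' := by omega
  rw [h3] at h2
  exact h2.trans (le_iSup (fun S : {S : Finset (ZMod 11) // S.card = s'} =>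
    syncTime E11 2 S.1) ⟨W, hW⟩)

/-- In `Cay(C₁₁, {a, a⁶})` the girth is `6`; with threshold `t = 2 = |H|`,
`d_{s,2} = 11 - s` for all `s > 5`. -/
theorem stmt_17 :
    (hasCycle (fun x y : ZMod 11 => y = 1 + x ∨ y = 6 + x) 6 ∧
      ∀ l, hasCycle (fun x y : ZMod 11 => y = 1 + x ∨ y = 6 + x) l → 6 ≤ l) ∧
    ∀ s : ℕ, 5 < s → s ≤ 11 →
      higherDiam (fun x y : ZMod 11 => y = 1 + x ∨ y = 6 + x) 2 s =
        ((11 - s : ℕ) : ℕ∞) := by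
  refine ⟨⟨⟨by norm_num, c6, by decide, by decide⟩, girth_lb⟩, ?_⟩
  intro s hs5 hs11
  refine le_antisymm (hd_upper s (by omega)) ?_
  interval_cases s
  · exact hd_lower 6 {0,1,2,3,4,5} (by decide) (by decide) (by norm_num)
  · exact hd_lower 7 {0,1,2,3,4,5,6} (by decide) (by decide) (by norm_num)
  · exact hd_lower 8 {0,1,2,3,4,5,6,7} (by decide) (by decide) (by norm_num)
  · exact hd_lower 9 {0,1,2,3,4,5,6,7,8} (by decide) (by decide) (by norm_num)
  · exact hd_lower 10 {0,1,2,3,4,5,6,7,8,9} (by decide) (by decide) (by norm_num)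
  · simp
end
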